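/- Let F be a finite field of order Q and k ≥ 2. The number of additive characters χ_v of F^k (v ∈ F^k) for which there exists α ∈ F with χ_v(x·f) = χ_v(α·f) for all polynomials f of degree < k−1, excluding the trivial character, is exactly Q(Q−1); and for all remaining Q^k − Q(Q−1) − 1 nontrivial characters χ_v, the eigenvalue ⟨z, χ_v⟩ of convolution by the root-counting function z is 0. -/

import Mathlib

set_option linter.unusedSectionVars false

open Finset

/-- Evaluation of the polynomial with coefficient vector `c` (degree `< k`) at `x`. -/
def evalc {F : Type*} [CommSemiring F] {k : ℕ} (c : Fin k → F) (x : F) : F :=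
  ∑ i : Fin k, c i * x ^ (i : ℕ)

/-- Multiplication by `x`: a polynomial of degree `< k-1` becomes one of degree `< k`. -/
def shiftc {F : Type*} [Zero F] {k : ℕ} (f : Fin (k - 1) → F) : Fin k → F :=
  fun i => if h : 0 < (i : ℕ) ∧ (i : ℕ) - 1 < k - 1 then f ⟨(i : ℕ) - 1, h.2⟩ else 0

/-- The natural inclusion of polynomials of degree `< k-1` into those of degree `< k`. -/
def embedc {F : Type*} [Zero F] {k : ℕ} (f : Fin (k - 1) → F) : Fin k → F :=
  fun i => if h : (i : ℕ) < k - 1 then f ⟨(i : ℕ), h⟩ else 0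

section Aux

variable {F : Type*} [Field F] [Fintype F] [DecidableEq F]

lemma addChar_map_sum {ι : Type*} (ψ : AddChar F ℂ) (s : Finset ι) (f : ι → F) :
    ψ (∑ i ∈ s, f i) = ∏ i ∈ s, ψ (f i) := by
  induction s using Finset.cons_induction with
  | empty => simp
  | cons a s ha ih => rw [Finset.sum_cons, Finset.prod_cons, AddChar.map_add_eq_mul, ih]

lemma addChar_ne_zero (ψ : AddChar F ℂ) (x : F) : ψ x ≠ 0 := by
  have h : ψ x * ψ (-x) = 1 := by
    rw [← AddChar.map_add_eq_mul, add_neg_cancel, AddChar.map_zero_eq_one]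
  exact left_ne_zero_of_mul_eq_one h

lemma sum_char_linear {m : ℕ} (ψ : AddChar F ℂ)
    (hsum : ∀ c : F, c ≠ 0 → ∑ t : F, ψ (c * t) = 0)
    (w : Fin m → F) (hw : w ≠ 0) :
    ∑ g : Fin m → F, ψ (∑ i, w i * g i) = 0 := by
  have h1 : ∑ g : Fin m → F, ψ (∑ i, w i * g i)
      = ∑ g ∈ Fintype.piFinset (fun _ : Fin m => (univ : Finset F)),
        ∏ i, ψ (w i * g i) := by
    rw [Fintype.piFinset_univ]
    exact Finset.sum_congr rfl fun g _ => addChar_map_sum ψ univ _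
  have h2 := Finset.prod_univ_sum (fun _ : Fin m => (univ : Finset F))
    (fun i x => ψ (w i * x))
  rw [h1, ← h2]
  obtain ⟨j, hj⟩ : ∃ j, w j ≠ 0 := by
    by_contra h
    push_neg at h
    exact hw (funext h)
  exact Finset.prod_eq_zero (mem_univ j) (hsum _ hj)

/-- The reduced form of the character condition. -/
lemma cond_iff {k : ℕ} (hk : 2 ≤ k) (ψ : AddChar F ℂ) (hnt : ∃ s : F, ψ s ≠ 1)
    (v : Fin k → F) (α : F) :
    (∀ f : Fin (k - 1) → F,
        ψ (∑ i : Fin k, v i * shiftc f i) = ψ (∑ i : Fin k, v i * (α * embedc f i))) ↔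
      ∀ j : Fin (k - 1), v ⟨(j : ℕ) + 1, by omega⟩ = α * v ⟨(j : ℕ), by omega⟩ := by
  have hι : Function.Injective (fun j : Fin (k - 1) => (⟨(j : ℕ) + 1, by omega⟩ : Fin k)) := by
    intro a b hab
    simpa [Fin.ext_iff] using hab
  have hκ : Function.Injective (fun j : Fin (k - 1) => (⟨(j : ℕ), by omega⟩ : Fin k)) := by
    intro a b hab
    simpa [Fin.ext_iff] using hab
  have hAv : ∀ f : Fin (k - 1) → F, ∀ j : Fin (k - 1),
      shiftc f (⟨(j : ℕ) + 1, by omega⟩ : Fin k) = f j := by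
    intro f j
    rw [shiftc, dif_pos (by exact ⟨Nat.succ_pos _, by simpa using j.isLt⟩)]
    exact congrArg f (Fin.ext (by simp))
  have hBv : ∀ f : Fin (k - 1) → F, ∀ j : Fin (k - 1),
      embedc f (⟨(j : ℕ), by omega⟩ : Fin k) = f j := by
    intro f j
    rw [embedc, dif_pos (by simpa using j.isLt)]
  have hA : ∀ f : Fin (k - 1) → F, (∑ i : Fin k, v i * shiftc f i)
      = ∑ j : Fin (k - 1), v ⟨(j : ℕ) + 1, by omega⟩ * f j := by
    intro f
    have himg : ∑ j : Fin (k - 1), v ⟨(j : ℕ) + 1, by omega⟩ * f j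
        = ∑ i ∈ (univ : Finset (Fin (k - 1))).image
            (fun j : Fin (k - 1) => (⟨(j : ℕ) + 1, by omega⟩ : Fin k)),
            v i * shiftc f i := by
      rw [Finset.sum_image (fun a _ b _ h => hι h)]
      exact Finset.sum_congr rfl fun j _ => by rw [hAv f j]
    rw [himg]
    refine (Finset.sum_subset (Finset.subset_univ _) ?_).symm
    intro i _ hi
    have h0 : shiftc f i = 0 := by
      rw [shiftc]
      rw [dif_neg]
      intro ⟨h1, h2⟩
      apply hi
      simp only [Finset.mem_image, Finset.mem_univ, true_and]
      exact ⟨⟨(i : ℕ) - 1, h2⟩, by simp [Fin.ext_iff]; omega⟩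
    rw [h0, mul_zero]
  have hB : ∀ f : Fin (k - 1) → F, (∑ i : Fin k, v i * (α * embedc f i))
      = ∑ j : Fin (k - 1), v ⟨(j : ℕ), by omega⟩ * (α * f j) := by
    intro f
    have himg : ∑ j : Fin (k - 1), v ⟨(j : ℕ), by omega⟩ * (α * f j)
        = ∑ i ∈ (univ : Finset (Fin (k - 1))).image
            (fun j : Fin (k - 1) => (⟨(j : ℕ), by omega⟩ : Fin k)),
            v i * (α * embedc f i) := by
      rw [Finset.sum_image (fun a _ b _ h => hκ h)]
      exact Finset.sum_congr rfl fun j _ => by rw [hBv f j]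
    rw [himg]
    refine (Finset.sum_subset (Finset.subset_univ _) ?_).symm
    intro i _ hi
    have h0 : embedc f i = 0 := by
      rw [embedc, dif_neg]
      intro h1
      apply hi
      simp only [Finset.mem_image, Finset.mem_univ, true_and]
      exact ⟨⟨(i : ℕ), h1⟩, by simp [Fin.ext_iff]⟩
    rw [h0, mul_zero, mul_zero]
  constructor
  · intro h j
    by_contra hne
    set c : F := v ⟨(j : ℕ) + 1, by omega⟩ - α * v ⟨(j : ℕ), by omega⟩ with hc
    have hc0 : c ≠ 0 := sub_ne_zero.mpr hne
    obtain ⟨s, hs⟩ := hnt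
    set f : Fin (k - 1) → F := Pi.single j (c⁻¹ * s) with hf
    have h1 := h f
    rw [hA, hB] at h1
    have e1 : (∑ j' : Fin (k - 1), v ⟨(j' : ℕ) + 1, by omega⟩ * f j')
        = v ⟨(j : ℕ) + 1, by omega⟩ * (c⁻¹ * s) := by
      rw [hf]
      rw [Finset.sum_eq_single j]
      · rw [Pi.single_eq_same]
      · intro b _ hb; simp [Pi.single_apply, hb]
      · simp
    have e2 : (∑ j' : Fin (k - 1), v ⟨(j' : ℕ), by omega⟩ * (α * f j'))
        = α * v ⟨(j : ℕ), by omega⟩ * (c⁻¹ * s) := by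
      rw [hf]
      rw [Finset.sum_eq_single j]
      · rw [Pi.single_eq_same]; ring
      · intro b _ hb; simp [Pi.single_apply, hb]
      · simp
    rw [e1, e2] at h1
    have e3 : v ⟨(j : ℕ) + 1, by omega⟩ * (c⁻¹ * s)
        = α * v ⟨(j : ℕ), by omega⟩ * (c⁻¹ * s) + s := by
      have e4 : (v ⟨(j : ℕ) + 1, by omega⟩ - α * v ⟨(j : ℕ), by omega⟩) * (c⁻¹ * s) = s := by
        rw [← hc, ← mul_assoc, mul_inv_cancel₀ hc0, one_mul]
      linear_combination e4
    rw [e3, AddChar.map_add_eq_mul] at h1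
    have hB0 := addChar_ne_zero ψ (α * v ⟨(j : ℕ), by omega⟩ * (c⁻¹ * s))
    exact hs (mul_left_cancel₀ hB0 (h1.trans (mul_one _).symm))
  · intro h f
    rw [hA, hB]
    congr 1
    apply Finset.sum_congr rfl
    intro j _
    rw [h j]
    ring

lemma geom_iff {k : ℕ} (hk : 2 ≤ k) (v : Fin k → F) :
    (v ≠ 0 ∧ ∃ α : F, ∀ j : Fin (k - 1),
        v ⟨(j : ℕ) + 1, by omega⟩ = α * v ⟨(j : ℕ), by omega⟩) ↔
      ∃ c α : F, c ≠ 0 ∧ v = fun i : Fin k => c * α ^ (i : ℕ) := by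
  constructor
  · rintro ⟨hv, α, hrec⟩
    have key : ∀ n : ℕ, ∀ hn : n < k, v ⟨n, hn⟩ = v ⟨0, by omega⟩ * α ^ n := by
      intro n
      induction n with
      | zero => intro hn; simp
      | succ m ih =>
        intro hn
        have hm : m < k - 1 := by omega
        have h := hrec ⟨m, hm⟩
        simp only at h
        rw [h, ih (by omega), pow_succ]
        ring
    have hc0 : v ⟨0, by omega⟩ ≠ 0 := by
      intro h0
      apply hv
      funext i
      rw [show i = (⟨(i : ℕ), i.isLt⟩ : Fin k) by simp, key _ i.isLt, h0, zero_mul]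
      rfl
    exact ⟨v ⟨0, by omega⟩, α, hc0, funext fun i => by
      rw [show i = (⟨(i : ℕ), i.isLt⟩ : Fin k) by simp, key _ i.isLt]⟩
  · rintro ⟨c, α, hc, rfl⟩
    constructor
    · intro h
      have := congrFun h ⟨0, by omega⟩
      simp at this
      exact hc this
    · refine ⟨α, fun j => ?_⟩
      show c * α ^ ((j : ℕ) + 1) = α * (c * α ^ (j : ℕ))
      rw [pow_succ]; ring

end Aux

theorem stmt19 {F : Type*} [Field F] [Fintype F] [DecidableEq F] (p Q k : ℕ)
    [Fact p.Prime] [CharP F p] [Algebra (ZMod p) F]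
    (hQ : Fintype.card F = Q) (hk : 2 ≤ k) :
    let e : ZMod p → ℂ := fun t => Complex.exp (2 * Real.pi * Complex.I * (t.val : ℂ) / p)
    let χ : (Fin k → F) → (Fin k → F) → ℂ :=
      fun v u => e (Algebra.trace (ZMod p) F (∑ i : Fin k, v i * u i))
    -- `z g` = the number of roots of `g` in `F`
    let z : (Fin k → F) → ℂ :=
      fun g => ((Finset.univ.filter (fun α : F => evalc g α = 0)).card : ℂ)
    -- exactly Q(Q-1) nontrivial characters satisfy the condition …
    (Set.ncard {v : Fin k → F | v ≠ 0 ∧ ∃ α : F, ∀ f : Fin (k - 1) → F,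
        χ v (shiftc f) = χ v (fun i => α * embedc f i)} = Q * (Q - 1)) ∧
    -- … and every other nontrivial character has eigenvalue 0
    (∀ v : Fin k → F, v ≠ 0 →
      ¬(∃ α : F, ∀ f : Fin (k - 1) → F,
          χ v (shiftc f) = χ v (fun i => α * embedc f i)) →
      ∑ g : Fin k → F, z g * (starRingEnd ℂ) (χ v g) = 0) := by
  have hp : p.Prime := Fact.out
  haveI : NeZero p := ⟨hp.ne_zero⟩
  intro e χ z
  -- identify `e` with the standard additive character
  have he : ∀ t : ZMod p, e t = ZMod.stdAddChar t := by
    intro t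
    have h := ZMod.stdAddChar_coe (N := p) (t.val : ℤ)
    have h2 : (((t.val : ℤ) : ZMod p)) = t := by
      push_cast
      simp [ZMod.natCast_val, ZMod.cast_id]
    rw [h2] at h
    rw [h]
    simp [e]
  set ψ : AddChar F ℂ := (ZMod.stdAddChar (N := p)).compAddMonoidHom
      (Algebra.trace (ZMod p) F).toAddMonoidHom with hψdef
  have hχ : ∀ v u : Fin k → F, χ v u = ψ (∑ i, v i * u i) := by
    intro v u
    simp only [χ]
    rw [he]
    rfl
  -- nondegeneracy of the trace
  have htr : ∀ a : F, a ≠ 0 → ∃ b : F, Algebra.trace (ZMod p) F (a * b) ≠ 0 := by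
    have hring : ringChar F = p := ringChar.eq F p
    subst hring
    intro a ha
    exact FiniteField.trace_to_zmod_nondegenerate F ha
  have hψval : ∀ x : F, ψ x = ZMod.stdAddChar (Algebra.trace (ZMod p) F x) := fun _ => rfl
  have hne1 : ∀ b : F, Algebra.trace (ZMod p) F b ≠ 0 → ψ b ≠ 1 := by
    intro b hb h1
    apply hb
    apply ZMod.injective_stdAddChar (N := p)
    rw [← hψval b, h1, AddChar.map_zero_eq_one]
  have hnt : ∃ s : F, ψ s ≠ 1 := by
    obtain ⟨b, hb⟩ := htr 1 one_ne_zero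
    rw [one_mul] at hb
    exact ⟨b, hne1 b hb⟩
  have hsum : ∀ c : F, c ≠ 0 → ∑ t : F, ψ (c * t) = 0 := by
    intro c hc
    have hms : ψ.mulShift c ≠ 1 := by
      obtain ⟨b, hb⟩ := htr c hc
      intro h
      have : ψ (c * b) = 1 := by
        rw [← AddChar.mulShift_apply (ψ := ψ) (r := c) (x := b), h]
        rfl
      exact hne1 _ hb this
    have := AddChar.sum_eq_zero_of_ne_one hms
    simpa [AddChar.mulShift_apply] using this
  have hconj : ∀ x : F, (starRingEnd ℂ) (ψ x) = ψ (-x) := by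
    intro x
    rw [hψval, hψval, map_neg, ZMod.stdAddChar_apply, ZMod.stdAddChar_apply,
      AddChar.map_neg_eq_inv, ← Circle.coe_inv_eq_conj]
  -- the condition, in clean form
  have hcond : ∀ v : Fin k → F,
      (v ≠ 0 ∧ ∃ α : F, ∀ f : Fin (k - 1) → F,
        χ v (shiftc f) = χ v (fun i => α * embedc f i)) ↔
      ∃ c α : F, c ≠ 0 ∧ v = fun i : Fin k => c * α ^ (i : ℕ) := by
    intro v
    rw [← geom_iff hk v]
    apply and_congr_right
    intro hv
    apply exists_congr
    intro α
    rw [← cond_iff hk ψ hnt v α]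
    apply forall_congr'
    intro f
    rw [hχ, hχ]
  have hQ0 : (Q : ℂ) ≠ 0 := by
    have : 0 < Q := hQ ▸ Fintype.card_pos
    exact_mod_cast this.ne'
  constructor
  · -- counting
    have hset : {v : Fin k → F | v ≠ 0 ∧ ∃ α : F, ∀ f : Fin (k - 1) → F,
        χ v (shiftc f) = χ v (fun i => α * embedc f i)}
        = ↑((((univ.filter (fun c : F => c ≠ 0)) ×ˢ (univ : Finset F))).image
            (fun ca : F × F => fun i : Fin k => ca.1 * ca.2 ^ (i : ℕ))) := by
      ext v
      simp only [Set.mem_setOf_eq, coe_image, Set.mem_image, mem_coe, mem_product,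
        mem_filter, mem_univ, true_and, and_true]
      rw [hcond v]
      constructor
      · rintro ⟨c, α, hc, rfl⟩; exact ⟨(c, α), hc, rfl⟩
      · rintro ⟨⟨c, α⟩, hc, rfl⟩; exact ⟨c, α, hc, rfl⟩
    rw [hset, Set.ncard_coe_finset]
    rw [Finset.card_image_of_injOn]
    · rw [Finset.card_product, Finset.card_univ, hQ]
      rw [Finset.filter_ne', Finset.card_erase_of_mem (mem_univ 0), Finset.card_univ, hQ]
      ring
    · rintro ⟨c, α⟩ hca ⟨c', α'⟩ hca' h
      simp only [coe_product, Set.mem_prod, mem_coe, mem_filter, mem_univ, true_and] at hca hca'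
      have h0 := congrFun h ⟨0, by omega⟩
      have h1 := congrFun h ⟨1, by omega⟩
      simp only [pow_zero, mul_one, pow_one] at h0 h1
      subst h0
      have : α = α' := by
        field_simp at h1
        exact mul_left_cancel₀ hca.1 h1
      rw [this]
  · -- eigenvalue vanishing
    intro v hv hnex
    have hvta : ∀ t α : F, v ≠ fun i : Fin k => t * α ^ (i : ℕ) := by
      intro t α h
      rcases eq_or_ne t 0 with rfl | ht
      · apply hv; rw [h]; funext i; simp
      · exact hnex (((hcond v).mpr ⟨t, α, ht, h⟩).2)
    have hz : ∀ g : Fin k → F, z g = ∑ α : F, if evalc g α = 0 then (1 : ℂ) else 0 := by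
      intro g
      simp only [z, Finset.card_filter]
      push_cast
      rfl
    calc ∑ g : Fin k → F, z g * (starRingEnd ℂ) (χ v g)
        = ∑ g : Fin k → F, ∑ α : F,
            (if evalc g α = 0 then (1 : ℂ) else 0) * ψ (-(∑ i, v i * g i)) := by
          apply Finset.sum_congr rfl
          intro g _
          rw [hz, hχ, hconj, Finset.sum_mul]
      _ = ∑ α : F, ∑ g : Fin k → F,
            (if evalc g α = 0 then (1 : ℂ) else 0) * ψ (-(∑ i, v i * g i)) :=
          Finset.sum_comm
      _ = 0 := by
          apply Finset.sum_eq_zero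
          intro α _
          have hind : ∀ g : Fin k → F, (if evalc g α = 0 then (1 : ℂ) else 0)
              = (Q : ℂ)⁻¹ * ∑ t : F, ψ (t * evalc g α) := by
            intro g
            rcases eq_or_ne (evalc g α) 0 with h | h
            · simp [h, hQ, Finset.card_univ]
              rw [inv_mul_cancel₀ hQ0]
            · rw [if_neg h]
              have : ∑ t : F, ψ (t * evalc g α) = 0 := by
                have := hsum (evalc g α) h
                rw [← this]
                apply Finset.sum_congr rfl
                intro t _
                rw [mul_comm]
              rw [this, mul_zero]
          calc ∑ g : Fin k → F, (if evalc g α = 0 then (1 : ℂ) else 0) * ψ (-(∑ i, v i * g i))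
              = ∑ g : Fin k → F, (Q : ℂ)⁻¹ *
                  ∑ t : F, ψ (t * evalc g α) * ψ (-(∑ i, v i * g i)) := by
                apply Finset.sum_congr rfl
                intro g _
                rw [hind g, mul_assoc, Finset.sum_mul]
            _ = (Q : ℂ)⁻¹ * ∑ t : F, ∑ g : Fin k → F,
                  ψ (∑ i : Fin k, (t * α ^ (i : ℕ) - v i) * g i) := by
                rw [← Finset.mul_sum]
                congr 1
                rw [Finset.sum_comm]
                apply Finset.sum_congr rfl
                intro t _
                apply Finset.sum_congr rfl
                intro g _
                rw [← AddChar.map_add_eq_mul]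
                congr 1
                rw [evalc, Finset.mul_sum, ← sub_eq_add_neg, ← Finset.sum_sub_distrib]
                apply Finset.sum_congr rfl
                intro i _
                ring
            _ = 0 := by
                have hzero : ∀ t ∈ (univ : Finset F),
                    ∑ g : Fin k → F, ψ (∑ i : Fin k, (t * α ^ (i : ℕ) - v i) * g i) = 0 := by
                  intro t _
                  apply sum_char_linear ψ hsum
                  intro hw
                  apply hvta t α
                  funext i
                  have := congrFun hw i
                  simp only [Pi.zero_apply, sub_eq_zero] at this
                  exact this.symm
                rw [Finset.sum_eq_zero hzero, mul_zero]
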